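/- Let n ≥ 1 and let V : ℝⁿ → ℝⁿ be a smooth vector field such that each component V_i(x) = ⟪V(x), e_i⟫ is a harmonic function (ΔV_i = 0 on ℝⁿ) and ∫_{ℝⁿ} ‖V(x)‖² dx < ∞. Then for every x ∈ ℝⁿ the derivative DV(x) is a symmetric linear map (⟪DV(x)u, w⟫ = ⟪DV(x)w, u⟫ for all u, w) and div V(x) = ∑_{i=1}^n ⟪DV(x)e_i, e_i⟫ = 0; i.e., the associated L² harmonic 1-form is both closed and co-closed. -/

import Mathlib

open MeasureTheory Filter Metric RealInnerProductSpace

/-- The Euclidean Laplacian of `f : ℝⁿ → ℝ` at `x`: the sum over the standard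
orthonormal basis of the second directional derivatives (the trace of the second
derivative of `f` at `x`). -/
noncomputable def lap {n : ℕ} (f : EuclideanSpace ℝ (Fin n) → ℝ)
    (x : EuclideanSpace ℝ (Fin n)) : ℝ :=
  ∑ i : Fin n,
    fderiv ℝ (fun y => fderiv ℝ f y (EuclideanSpace.single i 1)) x (EuclideanSpace.single i 1)

section Aux

variable {n : ℕ}

local notation "Ee" => EuclideanSpace ℝ (Fin n)
local notation "ee" i => EuclideanSpace.single i (1:ℝ)

lemma aux_ibp (u : Ee → ℝ) (hu : ContDiff ℝ (⊤:ℕ∞) u)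
    (η : Ee → ℝ) (hη : ContDiff ℝ (⊤:ℕ∞) η) (hηc : HasCompactSupport η) (i : Fin n) :
    ∫ x, (η x * η x) * (fderiv ℝ u x (ee i) * fderiv ℝ u x (ee i))
      = (- ∫ x, (2 * η x * fderiv ℝ η x (ee i)) * fderiv ℝ u x (ee i) * u x)
        - ∫ x, (η x * η x) *
            (fderiv ℝ (fun y => fderiv ℝ u y (ee i)) x (ee i)) * u x := by
  set w : Ee → ℝ := fun y => fderiv ℝ u y (ee i) with hw
  have hwsm : ContDiff ℝ (⊤:ℕ∞) w :=
    (hu.fderiv_right (mod_cast le_top)).clm_apply contDiff_const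
  set f : Ee → ℝ := fun y => η y * η y * w y with hf
  have hfsm : ContDiff ℝ (⊤:ℕ∞) f := (hη.mul hη).mul hwsm
  have hfc : HasCompactSupport f := by
    have : f = fun y => η y * (η y * w y) := by funext y; simp [hf]; ring
    rw [this]; exact hηc.mul_right
  -- derivative of f
  have hfd : ∀ x, fderiv ℝ f x (ee i)
      = η x * η x * (fderiv ℝ w x (ee i))
        + (2 * η x * fderiv ℝ η x (ee i)) * w x := by
    intro x
    have hη' : HasFDerivAt η (fderiv ℝ η x) x :=
      (hη.differentiable (by simp) x).hasFDerivAt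
    have hw' : HasFDerivAt w (fderiv ℝ w x) x :=
      (hwsm.differentiable (by simp) x).hasFDerivAt
    have H := ((hη'.mul hη').mul hw').fderiv
    rw [hf, show (fun y => η y * η y * w y) = η * η * w from rfl, H]
    simp [ContinuousLinearMap.add_apply, ContinuousLinearMap.smul_apply]
    ring
  have cont_w : Continuous w := hwsm.continuous
  have cont_f : Continuous f := hfsm.continuous
  have hfderiv_cont : Continuous (fun x => fderiv ℝ f x (ee i)) :=
    ((hfsm.fderiv_right (m := (⊤:ℕ∞)) (mod_cast le_top)).clm_apply contDiff_const).continuous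
  have hfderiv_supp : HasCompactSupport (fun x => fderiv ℝ f x (ee i)) :=
    (hfc.fderiv ℝ).comp_left (g := fun L : Ee →L[ℝ] ℝ => L (ee i)) rfl
  have int1 : Integrable (fun x => fderiv ℝ f x (ee i) * u x) :=
    (hfderiv_cont.mul hu.continuous).integrable_of_hasCompactSupport
      hfderiv_supp.mul_right
  have int2 : Integrable (fun x => f x * w x) :=
    (cont_f.mul cont_w).integrable_of_hasCompactSupport hfc.mul_right
  have int3 : Integrable (fun x => f x * u x) :=
    (cont_f.mul hu.continuous).integrable_of_hasCompactSupport hfc.mul_right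
  have IBP := integral_mul_fderiv_eq_neg_fderiv_mul_of_integrable int1 int2 int3
    (fun x _ => hfsm.differentiable (by simp) x) (fun x _ => hu.differentiable (by simp) x)
  -- IBP : ∫ f * w = - ∫ (fderiv f ∘ eᵢ) * u
  have intA : Integrable (fun x => (2 * η x * fderiv ℝ η x (ee i)) * w x * u x) := by
    have hpc : Continuous (fun x => fderiv ℝ η x (ee i)) :=
      ((hη.fderiv_right (m := (⊤:ℕ∞)) (mod_cast le_top)).clm_apply contDiff_const).continuous
    have hc : Continuous (fun x => (2 * η x * fderiv ℝ η x (ee i)) * w x * u x) :=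
      (((continuous_const.mul hη.continuous).mul hpc).mul cont_w).mul hu.continuous
    have hs : HasCompactSupport (fun x => (2 * η x * fderiv ℝ η x (ee i)) * w x * u x) := by
      have : (fun x => (2 * η x * fderiv ℝ η x (ee i)) * w x * u x)
          = fun x => η x * (2 * fderiv ℝ η x (ee i) * w x * u x) := by
        funext x; ring
      rw [this]; exact hηc.mul_right
    exact hc.integrable_of_hasCompactSupport hs
  have intB : Integrable (fun x => (η x * η x) * (fderiv ℝ w x (ee i)) * u x) := by
    have hwd : Continuous (fun x => fderiv ℝ w x (ee i)) :=
      ((hwsm.fderiv_right (m := (⊤:ℕ∞)) (mod_cast le_top)).clm_apply contDiff_const).continuous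
    have hc : Continuous (fun x => (η x * η x) * (fderiv ℝ w x (ee i)) * u x) :=
      ((hη.continuous.mul hη.continuous).mul hwd).mul hu.continuous
    have hs : HasCompactSupport (fun x => (η x * η x) * (fderiv ℝ w x (ee i)) * u x) := by
      have : (fun x => (η x * η x) * (fderiv ℝ w x (ee i)) * u x)
          = fun x => η x * (η x * fderiv ℝ w x (ee i) * u x) := by
        funext x; ring
      rw [this]; exact hηc.mul_right
    exact hc.integrable_of_hasCompactSupport hs
  calc ∫ x, (η x * η x) * (w x * w x) = ∫ x, f x * w x := by
        congr 1; funext x; simp [hf]; ring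
    _ = - ∫ x, fderiv ℝ f x (ee i) * u x := IBP
    _ = - ∫ x, ((2 * η x * fderiv ℝ η x (ee i)) * w x * u x
          + (η x * η x) * (fderiv ℝ w x (ee i)) * u x) := by
        congr 1; congr 1; funext x; rw [hfd x]; ring
    _ = - ((∫ x, (2 * η x * fderiv ℝ η x (ee i)) * w x * u x)
          + ∫ x, (η x * η x) * (fderiv ℝ w x (ee i)) * u x) := by
        rw [integral_add intA intB]
    _ = (- ∫ x, (2 * η x * fderiv ℝ η x (ee i)) * w x * u x)
          - ∫ x, (η x * η x) * (fderiv ℝ w x (ee i)) * u x := by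
        rw [neg_add, ← sub_eq_add_neg]

end Aux

section Aux2
variable {n : ℕ}
local notation "Ee" => EuclideanSpace ℝ (Fin n)
local notation "ee" i => EuclideanSpace.single i (1:ℝ)

open MeasureTheory

lemma aux_cacc (u : Ee → ℝ) (hu : ContDiff ℝ (⊤:ℕ∞) u)
    (hlap : ∀ x : Ee, (∑ i : Fin n,
      fderiv ℝ (fun y => fderiv ℝ u y (ee i)) x (ee i)) = 0)
    (η : Ee → ℝ) (hη : ContDiff ℝ (⊤:ℕ∞) η) (hηc : HasCompactSupport η) :
    ∑ i : Fin n, ∫ x, (η x * η x) * (fderiv ℝ u x (ee i) * fderiv ℝ u x (ee i))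
      ≤ 4 * ∑ i : Fin n, ∫ x,
          (fderiv ℝ η x (ee i) * fderiv ℝ η x (ee i)) * (u x * u x) := by
  have contu : Continuous u := hu.continuous
  have cw : ∀ i : Fin n, Continuous (fun x => fderiv ℝ u x (ee i)) := fun i =>
    ((hu.fderiv_right (m := (⊤:ℕ∞)) (mod_cast le_top)).clm_apply contDiff_const).continuous
  have cp : ∀ i : Fin n, Continuous (fun x => fderiv ℝ η x (ee i)) := fun i =>
    ((hη.fderiv_right (m := (⊤:ℕ∞)) (mod_cast le_top)).clm_apply contDiff_const).continuous
  have cpsupp : ∀ i : Fin n, HasCompactSupport (fun x => fderiv ℝ η x (ee i)) := fun i =>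
    (hηc.fderiv ℝ).comp_left (g := fun L : Ee →L[ℝ] ℝ => L (ee i)) rfl
  have cDw : ∀ i : Fin n,
      Continuous (fun x => fderiv ℝ (fun y => fderiv ℝ u y (ee i)) x (ee i)) := fun i =>
    ((((hu.fderiv_right (m := (⊤:ℕ∞)) (mod_cast le_top)).clm_apply
        contDiff_const).fderiv_right (m := (⊤:ℕ∞))
        (mod_cast le_top)).clm_apply contDiff_const).continuous
  -- generic integrability for η-supported continuous functions
  have intη : ∀ g : Ee → ℝ, Continuous g → Integrable (fun x => η x * g x) := fun g hg =>
    (hη.continuous.mul hg).integrable_of_hasCompactSupport hηc.mul_right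
  have intp : ∀ i : Fin n, ∀ g : Ee → ℝ, Continuous g →
      Integrable (fun x => fderiv ℝ η x (ee i) * g x) := fun i g hg =>
    ((cp i).mul hg).integrable_of_hasCompactSupport (cpsupp i).mul_right
  have intA : ∀ i : Fin n, Integrable (fun x =>
      (2 * η x * fderiv ℝ η x (ee i)) * fderiv ℝ u x (ee i) * u x) := by
    intro i
    have : (fun x => (2 * η x * fderiv ℝ η x (ee i)) * fderiv ℝ u x (ee i) * u x)
        = fun x => η x * (2 * fderiv ℝ η x (ee i) * fderiv ℝ u x (ee i) * u x) := by
      funext x; ring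
    rw [this]
    exact intη _ (((continuous_const.mul (cp i)).mul (cw i)).mul contu)
  have intB : ∀ i : Fin n, Integrable (fun x =>
      (η x * η x) * (fderiv ℝ (fun y => fderiv ℝ u y (ee i)) x (ee i)) * u x) := by
    intro i
    have : (fun x => (η x * η x) * (fderiv ℝ (fun y => fderiv ℝ u y (ee i)) x (ee i)) * u x)
        = fun x => η x * (η x * fderiv ℝ (fun y => fderiv ℝ u y (ee i)) x (ee i) * u x) := by
      funext x; ring
    rw [this]
    exact intη _ ((hη.continuous.mul (cDw i)).mul contu)
  have intC : ∀ i : Fin n, Integrable (fun x =>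
      (η x * η x) * (fderiv ℝ u x (ee i) * fderiv ℝ u x (ee i))) := by
    intro i
    have : (fun x => (η x * η x) * (fderiv ℝ u x (ee i) * fderiv ℝ u x (ee i)))
        = fun x => η x * (η x * (fderiv ℝ u x (ee i) * fderiv ℝ u x (ee i))) := by
      funext x; ring
    rw [this]
    exact intη _ (hη.continuous.mul ((cw i).mul (cw i)))
  have intD : ∀ i : Fin n, Integrable (fun x =>
      (fderiv ℝ η x (ee i) * fderiv ℝ η x (ee i)) * (u x * u x)) := by
    intro i
    have : (fun x => (fderiv ℝ η x (ee i) * fderiv ℝ η x (ee i)) * (u x * u x))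
        = fun x => fderiv ℝ η x (ee i) * (fderiv ℝ η x (ee i) * (u x * u x)) := by
      funext x; ring
    rw [this]
    exact intp i _ ((cp i).mul (contu.mul contu))
  -- the sum of second-order terms vanishes
  have S1 : (∑ i : Fin n, ∫ x,
      (η x * η x) * (fderiv ℝ (fun y => fderiv ℝ u y (ee i)) x (ee i)) * u x) = 0 := by
    rw [← integral_finset_sum _ (fun i _ => intB i)]
    have : (fun x => ∑ i : Fin n,
        (η x * η x) * (fderiv ℝ (fun y => fderiv ℝ u y (ee i)) x (ee i)) * u x)
        = fun _ => (0:ℝ) := by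
      funext x
      rw [← Finset.sum_mul, ← Finset.mul_sum, hlap x, mul_zero, zero_mul]
    rw [this, integral_zero]
  -- Caccioppoli identity
  have ident : (∑ i : Fin n, ∫ x, (η x * η x) * (fderiv ℝ u x (ee i) * fderiv ℝ u x (ee i)))
      = ∑ i : Fin n, - ∫ x,
          (2 * η x * fderiv ℝ η x (ee i)) * fderiv ℝ u x (ee i) * u x := by
    have := Finset.sum_congr rfl (fun i (_ : i ∈ Finset.univ) => aux_ibp u hu η hη hηc i)
    rw [this, Finset.sum_sub_distrib, S1, sub_zero]
  rw [ident]
  -- per-term bound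
  have bound : ∀ i : Fin n,
      (- ∫ x, (2 * η x * fderiv ℝ η x (ee i)) * fderiv ℝ u x (ee i) * u x)
      ≤ (1/2) * (∫ x, (η x * η x) * (fderiv ℝ u x (ee i) * fderiv ℝ u x (ee i)))
        + 2 * ∫ x, (fderiv ℝ η x (ee i) * fderiv ℝ η x (ee i)) * (u x * u x) := by
    intro i
    rw [← integral_neg]
    have step : ∫ x, -((2 * η x * fderiv ℝ η x (ee i)) * fderiv ℝ u x (ee i) * u x)
        ≤ ∫ x, ((1/2) * ((η x * η x) * (fderiv ℝ u x (ee i) * fderiv ℝ u x (ee i)))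
            + 2 * ((fderiv ℝ η x (ee i) * fderiv ℝ η x (ee i)) * (u x * u x))) := by
      apply integral_mono (intA i).neg (((intC i).const_mul _).add ((intD i).const_mul _))
      intro x
      have h := sq_nonneg (η x * fderiv ℝ u x (ee i) + 2 * fderiv ℝ η x (ee i) * u x)
      simp only [Pi.add_apply, Pi.neg_apply]
      nlinarith [h]
    calc ∫ x, -((2 * η x * fderiv ℝ η x (ee i)) * fderiv ℝ u x (ee i) * u x)
        ≤ _ := step
      _ = (1/2) * (∫ x, (η x * η x) * (fderiv ℝ u x (ee i) * fderiv ℝ u x (ee i)))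
        + 2 * ∫ x, (fderiv ℝ η x (ee i) * fderiv ℝ η x (ee i)) * (u x * u x) := by
          rw [integral_add ((intC i).const_mul _) ((intD i).const_mul _),
            integral_const_mul, integral_const_mul]
  have sumbound := Finset.sum_le_sum (fun i (_ : i ∈ Finset.univ) => bound i)
  rw [Finset.sum_add_distrib, ← Finset.mul_sum, ← Finset.mul_sum] at sumbound
  rw [← ident] at sumbound ⊢
  linarith
end Aux2

section Aux3
variable {n : ℕ}
local notation "Ee" => EuclideanSpace ℝ (Fin n)
local notation "ee" i => EuclideanSpace.single i (1:ℝ)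
open MeasureTheory

set_option maxHeartbeats 1000000 in
lemma comp_vanish (u : Ee → ℝ) (hu : ContDiff ℝ (⊤:ℕ∞) u)
    (hlap : ∀ x : Ee, (∑ i : Fin n,
      fderiv ℝ (fun y => fderiv ℝ u y (ee i)) x (ee i)) = 0)
    (hI : Integrable (fun x : Ee => u x * u x)) :
    ∀ (x v : Ee), fderiv ℝ u x v = 0 := by
  intro x₀
  have cw : ∀ i : Fin n, Continuous (fun x => fderiv ℝ u x (ee i)) := fun i =>
    ((hu.fderiv_right (m := (⊤:ℕ∞)) (mod_cast le_top)).clm_apply contDiff_const).continuous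
  -- the fixed model bump at the origin and its derivative bound
  set η₀ : ContDiffBump (0 : Ee) := ⟨1, 2, one_pos, one_lt_two⟩ with hη₀def
  have hη₀sm : ContDiff ℝ (⊤:ℕ∞) η₀ := η₀.contDiff
  obtain ⟨C, hC⟩ : ∃ C, ∀ z : Ee, ‖fderiv ℝ (η₀ : Ee → ℝ) z‖ ≤ C :=
    (hη₀sm.continuous_fderiv (by simp)).bounded_above_of_compact_support
      (η₀.hasCompactSupport.fderiv ℝ)
  have hC0 : 0 ≤ C := le_trans (norm_nonneg _) (hC 0)
  -- the test bump at x₀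
  set ψ : ContDiffBump x₀ := ⟨1, 2, one_pos, one_lt_two⟩ with hψdef
  set F : Ee → ℝ := fun x => ∑ i : Fin n, fderiv ℝ u x (ee i) * fderiv ℝ u x (ee i) with hF
  have hFcont : Continuous F := continuous_finset_sum _ (fun i _ => (cw i).mul (cw i))
  have hFnonneg : ∀ x, 0 ≤ F x := fun x =>
    Finset.sum_nonneg (fun i _ => mul_self_nonneg _)
  have hψFcont : Continuous (fun x => ψ x * F x) := ψ.continuous.mul hFcont
  have hψFsupp : HasCompactSupport (fun x => ψ x * F x) := ψ.hasCompactSupport.mul_right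
  have hψFint : Integrable (fun x => ψ x * F x) :=
    hψFcont.integrable_of_hasCompactSupport hψFsupp
  set I : ℝ := ∫ x : Ee, u x * u x with hIdef
  have hInn : 0 ≤ I := integral_nonneg (fun x => mul_self_nonneg _)
  set a : ℝ := ∫ x, ψ x * F x with hadef
  have hann : 0 ≤ a := integral_nonneg (fun x => mul_nonneg ψ.nonneg (hFnonneg x))
  -- the key estimate for every large R
  have key : ∀ R : ℝ, max (‖x₀‖ + 2) 1 ≤ R → a ≤ 4 * n * (R⁻¹ * C)^2 * I := by
    intro R hR
    have hR1 : (1:ℝ) ≤ R := le_trans (le_max_right _ _) hR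
    have hRpos : (0:ℝ) < R := lt_of_lt_of_le one_pos hR1
    have hRx : ‖x₀‖ + 2 ≤ R := le_trans (le_max_left _ _) hR
    set L : Ee →L[ℝ] Ee := R⁻¹ • ContinuousLinearMap.id ℝ Ee with hLdef
    have hLx : ∀ x : Ee, L x = R⁻¹ • x := fun x => rfl
    set η : Ee → ℝ := fun x => η₀ (L x) with hηdef
    have hηsm : ContDiff ℝ (⊤:ℕ∞) η := hη₀sm.comp L.contDiff
    have hηc : HasCompactSupport η := by
      apply HasCompactSupport.intro (isCompact_closedBall (0:Ee) (2*R))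
      intro x hx
      apply η₀.zero_of_le_dist
      have hx' : 2 * R < ‖x‖ := by
        simpa [Metric.mem_closedBall, dist_zero_right] using hx
      have : dist (L x) 0 = R⁻¹ * ‖x‖ := by
        rw [hLx, dist_zero_right, norm_smul, Real.norm_eq_abs, abs_of_pos (inv_pos.2 hRpos)]
      rw [this]
      rw [hη₀def]
      have h2 : (2:ℝ) = R⁻¹ * (2 * R) := by field_simp
      show (2:ℝ) ≤ R⁻¹ * ‖x‖
      rw [h2]
      exact mul_le_mul_of_nonneg_left (le_of_lt hx') (le_of_lt (inv_pos.2 hRpos))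
    -- derivative bound for η
    have hηd : ∀ x : Ee, ∀ i : Fin n,
        fderiv ℝ η x (ee i) = R⁻¹ * fderiv ℝ (η₀ : Ee → ℝ) (L x) (ee i) := by
      intro x i
      have h1 : HasFDerivAt η ((fderiv ℝ (η₀ : Ee → ℝ) (L x)).comp L) x :=
        ((η₀.contDiff (n := (⊤:ℕ∞))).differentiable (by simp) (L x)).hasFDerivAt.comp x
          L.hasFDerivAt
      rw [h1.fderiv]
      simp only [ContinuousLinearMap.coe_comp', Function.comp_apply]
      rw [hLx, hLx, _root_.map_smul, smul_eq_mul]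
    have hηdb : ∀ x : Ee, ∀ i : Fin n, |fderiv ℝ η x (ee i)| ≤ R⁻¹ * C := by
      intro x i
      rw [hηd x i, abs_mul, abs_of_pos (inv_pos.2 hRpos)]
      apply mul_le_mul_of_nonneg_left _ (le_of_lt (inv_pos.2 hRpos))
      calc |fderiv ℝ (η₀ : Ee → ℝ) (L x) (ee i)|
          ≤ ‖fderiv ℝ (η₀ : Ee → ℝ) (L x)‖ * ‖(ee i : Ee)‖ :=
            (fderiv ℝ (η₀ : Ee → ℝ) (L x)).le_opNorm _
        _ ≤ C := by rw [EuclideanSpace.norm_single, norm_one, mul_one]; exact hC _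
    -- ψ ≤ η * η pointwise
    have hψle : ∀ x : Ee, ψ x ≤ η x * η x := by
      intro x
      by_cases h : dist x x₀ ≤ 2
      · have hx : ‖x‖ ≤ ‖x₀‖ + 2 := by
          calc ‖x‖ = dist x 0 := (dist_zero_right x).symm
            _ ≤ dist x x₀ + dist x₀ 0 := dist_triangle _ _ _
            _ ≤ 2 + ‖x₀‖ := by rw [dist_zero_right]; linarith
            _ = ‖x₀‖ + 2 := by ring
        have hη1 : η x = 1 := by
          apply η₀.one_of_mem_closedBall
          rw [Metric.mem_closedBall, hLx, dist_zero_right, norm_smul, Real.norm_eq_abs,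
            abs_of_pos (inv_pos.2 hRpos)]
          show R⁻¹ * ‖x‖ ≤ η₀.rIn
          have : R⁻¹ * ‖x‖ ≤ R⁻¹ * R :=
            mul_le_mul_of_nonneg_left (le_trans hx hRx) (le_of_lt (inv_pos.2 hRpos))
          rw [inv_mul_cancel₀ (ne_of_gt hRpos)] at this
          simpa [hη₀def] using this
        rw [hη1, mul_one]
        exact ψ.le_one
      · have : ψ x = 0 := ψ.zero_of_le_dist (by push_neg at h; simpa [hψdef] using le_of_lt h)
        rw [this]
        exact mul_nonneg (η₀.nonneg) (η₀.nonneg)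
    -- chain of inequalities
    have step1 : a ≤ ∑ i : Fin n, ∫ x,
        (η x * η x) * (fderiv ℝ u x (ee i) * fderiv ℝ u x (ee i)) := by
      have intηF : Integrable (fun x => (η x * η x) * F x) := by
        have : (fun x => (η x * η x) * F x) = fun x => η x * (η x * F x) := by
          funext x; ring
        rw [this]
        exact (hηsm.continuous.mul (hηsm.continuous.mul hFcont)).integrable_of_hasCompactSupport
          hηc.mul_right
      have h1 : a ≤ ∫ x, (η x * η x) * F x := by
        apply integral_mono hψFint intηF
        intro x
        exact mul_le_mul_of_nonneg_right (hψle x) (hFnonneg x)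
      have h2 : ∫ x, (η x * η x) * F x = ∑ i : Fin n, ∫ x,
          (η x * η x) * (fderiv ℝ u x (ee i) * fderiv ℝ u x (ee i)) := by
        have e1 : (fun x => (η x * η x) * F x) = fun x => ∑ i : Fin n,
            (η x * η x) * (fderiv ℝ u x (ee i) * fderiv ℝ u x (ee i)) := by
          funext x; rw [hF, Finset.mul_sum]
        rw [e1]
        apply integral_finset_sum
        intro i _
        have : (fun x => (η x * η x) * (fderiv ℝ u x (ee i) * fderiv ℝ u x (ee i)))
            = fun x => η x * (η x * (fderiv ℝ u x (ee i) * fderiv ℝ u x (ee i))) := by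
          funext x; ring
        rw [this]
        exact (hηsm.continuous.mul (hηsm.continuous.mul ((cw i).mul
          (cw i)))).integrable_of_hasCompactSupport hηc.mul_right
      linarith [h1, h2.le, h2.ge]
    have step2 := aux_cacc u hu hlap η hηsm hηc
    have step3 : (∑ i : Fin n, ∫ x,
        (fderiv ℝ η x (ee i) * fderiv ℝ η x (ee i)) * (u x * u x))
        ≤ ∑ i : Fin n, (R⁻¹ * C)^2 * I := by
      apply Finset.sum_le_sum
      intro i _
      have cp : Continuous (fun x => fderiv ℝ η x (ee i)) :=
        ((hηsm.fderiv_right (m := (⊤:ℕ∞)) (mod_cast le_top)).clm_apply contDiff_const).continuous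
      have cpsupp : HasCompactSupport (fun x => fderiv ℝ η x (ee i)) :=
        (hηc.fderiv ℝ).comp_left (g := fun T : Ee →L[ℝ] ℝ => T (ee i)) rfl
      have intLHS : Integrable (fun x =>
          (fderiv ℝ η x (ee i) * fderiv ℝ η x (ee i)) * (u x * u x)) := by
        have : (fun x => (fderiv ℝ η x (ee i) * fderiv ℝ η x (ee i)) * (u x * u x))
            = fun x => fderiv ℝ η x (ee i) * (fderiv ℝ η x (ee i) * (u x * u x)) := by
          funext x; ring
        rw [this]
        exact (cp.mul (cp.mul (hu.continuous.mul
          hu.continuous))).integrable_of_hasCompactSupport cpsupp.mul_right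
      have : ∫ x, (fderiv ℝ η x (ee i) * fderiv ℝ η x (ee i)) * (u x * u x)
          ≤ ∫ x, (R⁻¹ * C)^2 * (u x * u x) := by
        apply integral_mono intLHS (hI.const_mul _)
        intro x
        have hb := hηdb x i
        have h1 : fderiv ℝ η x (ee i) * fderiv ℝ η x (ee i) ≤ (R⁻¹ * C)^2 := by
          have h2 := abs_le.mp hb
          nlinarith [h2.1, h2.2]
        exact mul_le_mul_of_nonneg_right h1 (mul_self_nonneg _)
      calc ∫ x, (fderiv ℝ η x (ee i) * fderiv ℝ η x (ee i)) * (u x * u x)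
          ≤ ∫ x, (R⁻¹ * C)^2 * (u x * u x) := this
        _ = (R⁻¹ * C)^2 * I := by rw [hIdef, integral_const_mul]
    calc a ≤ _ := step1
      _ ≤ 4 * ∑ i : Fin n, ∫ x,
          (fderiv ℝ η x (ee i) * fderiv ℝ η x (ee i)) * (u x * u x) := step2
      _ ≤ 4 * ∑ i : Fin n, (R⁻¹ * C)^2 * I := by linarith [step3]
      _ = 4 * n * (R⁻¹ * C)^2 * I := by
          rw [Finset.sum_const, Finset.card_univ, Fintype.card_fin]; push_cast; ring
  -- conclude a = 0
  have ha0 : a = 0 := by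
    by_contra hne
    have hapos : 0 < a := lt_of_le_of_ne hann (Ne.symm hne)
    set K : ℝ := 4 * n * C^2 * I with hK
    have hKnn : 0 ≤ K := by positivity
    set R : ℝ := max (max (‖x₀‖ + 2) 1) (Real.sqrt (K / a) + 1) with hRdef
    have hR1 : max (‖x₀‖ + 2) 1 ≤ R := le_max_left _ _
    have hRs : Real.sqrt (K / a) + 1 ≤ R := le_max_right _ _
    have hRpos : (0:ℝ) < R :=
      lt_of_lt_of_le one_pos (le_trans (le_max_right _ _) hR1)
    have hk := key R hR1
    have hsq : Real.sqrt (K / a) ^ 2 = K / a := Real.sq_sqrt (by positivity)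
    have hsnn : 0 ≤ Real.sqrt (K / a) := Real.sqrt_nonneg _
    have hRK : K / a < R ^ 2 := by nlinarith
    have ha' : a ≤ K / R^2 := by
      have : 4 * n * (R⁻¹ * C)^2 * I = K / R^2 := by
        rw [hK]; field_simp
      linarith [hk, this.le, this.ge]
    have hKa : a * R^2 ≤ K := (le_div_iff₀ (by positivity)).mp ha'
    have hKlt : K < R ^ 2 * a := (div_lt_iff₀ hapos).mp hRK
    nlinarith [hKa, hKlt]
  -- from a = 0 deduce F x₀ = 0
  have hae : (fun x => ψ x * F x) = 0 := by
    have h0le : (0:Ee → ℝ) ≤ fun x => ψ x * F x :=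
      fun x => mul_nonneg ψ.nonneg (hFnonneg x)
    have h2 := (integral_eq_zero_iff_of_nonneg h0le hψFint).1 (by rw [← hadef]; exact ha0)
    exact Continuous.ae_eq_iff_eq volume hψFcont (continuous_const : Continuous fun _ : Ee => (0:ℝ)) |>.mp h2
  have hFx₀ : F x₀ = 0 := by
    have h1 : ψ x₀ * F x₀ = 0 := congrFun hae x₀
    have hψ1 : ψ x₀ = 1 := ψ.one_of_mem_closedBall (Metric.mem_closedBall_self zero_le_one)
    rw [hψ1, one_mul] at h1
    exact h1
  have hw0 : ∀ i : Fin n, fderiv ℝ u x₀ (ee i) = 0 := by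
    intro i
    have := (Finset.sum_eq_zero_iff_of_nonneg
      (fun j (_ : j ∈ Finset.univ) => mul_self_nonneg (fderiv ℝ u x₀ (ee j)))).1 hFx₀ i
      (Finset.mem_univ i)
    exact mul_self_eq_zero.mp this
  -- extend to all directions via the basis
  intro v
  have : ((fderiv ℝ u x₀ : Ee →L[ℝ] ℝ) : Ee →ₗ[ℝ] ℝ) = 0 := by
    apply Module.Basis.ext (EuclideanSpace.basisFun (Fin n) ℝ).toBasis
    intro i
    simpa using hw0 i
  exact DFunLike.congr_fun (α := Ee) (by exact_mod_cast this) v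

end Aux3


/-- Corollary 1.1(i) (Andreotti–Vesentini) for 1-forms on ℝⁿ: an L² harmonic
1-form (a smooth vector field with harmonic components and `‖V‖ ∈ L²`) is both
closed (symmetric derivative) and co-closed (divergence-free). -/
theorem stmt_11 (n : ℕ) (hn : 1 ≤ n)
    (V : EuclideanSpace ℝ (Fin n) → EuclideanSpace ℝ (Fin n))
    (hV : ContDiff ℝ (⊤ : ℕ∞) V)
    (hharm : ∀ i : Fin n, ∀ x,
      lap (fun y => ⟪V y, EuclideanSpace.single i 1⟫) x = 0)
    (hL2 : (∫⁻ x : EuclideanSpace ℝ (Fin n), ENNReal.ofReal (‖V x‖ ^ 2)) < ⊤) :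
    ∀ x,
      (∀ u w, ⟪fderiv ℝ V x u, w⟫ = ⟪fderiv ℝ V x w, u⟫) ∧
      (∑ i : Fin n, ⟪fderiv ℝ V x (EuclideanSpace.single i 1),
        EuclideanSpace.single i 1⟫) = 0 := by
  have hVcont : Continuous V := hV.continuous
  -- integrability of ‖V‖²
  have hL2' : Integrable (fun x : EuclideanSpace ℝ (Fin n) => ‖V x‖ ^ 2) := by
    constructor
    · exact ((hVcont.norm).pow 2).aestronglyMeasurable
    · rw [hasFiniteIntegral_iff_ofReal (ae_of_all _ (fun x => sq_nonneg _))]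
      exact hL2
  -- components
  set uu : Fin n → EuclideanSpace ℝ (Fin n) → ℝ :=
    fun j y => ⟪V y, EuclideanSpace.single j 1⟫ with huu
  have huusm : ∀ j, ContDiff ℝ (⊤:ℕ∞) (uu j) := by
    intro j
    have : uu j = fun y => (innerSL ℝ (EuclideanSpace.single j (1:ℝ))) (V y) := by
      funext y; exact real_inner_comm _ _
    rw [this]
    exact (innerSL ℝ (EuclideanSpace.single j (1:ℝ))).contDiff.comp hV
  have hud : ∀ j (x v : EuclideanSpace ℝ (Fin n)),
      fderiv ℝ (uu j) x v = ⟪fderiv ℝ V x v, EuclideanSpace.single j 1⟫ := by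
    intro j x v
    have h1 : uu j = fun y => (innerSL ℝ (EuclideanSpace.single j (1:ℝ))) (V y) := by
      funext y; exact real_inner_comm _ _
    rw [h1, real_inner_comm]
    have hd : HasFDerivAt (fun y => (innerSL ℝ (EuclideanSpace.single j (1:ℝ))) (V y))
        (((innerSL ℝ (EuclideanSpace.single j (1:ℝ)))).comp (fderiv ℝ V x)) x :=
      ((innerSL ℝ (EuclideanSpace.single j (1:ℝ))).hasFDerivAt).comp x
        (hV.differentiable (by simp) x).hasFDerivAt
    rw [hd.fderiv]
    rfl
  have huuint : ∀ j, Integrable (fun x => uu j x * uu j x) := by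
    intro j
    apply hL2'.mono ((huusm j).continuous.mul (huusm j).continuous).aestronglyMeasurable
    apply ae_of_all
    intro x
    have h1 : |uu j x| ≤ ‖V x‖ := by
      have := abs_real_inner_le_norm (V x) (EuclideanSpace.single j (1:ℝ))
      rwa [EuclideanSpace.norm_single, norm_one, mul_one] at this
    have h2 := abs_nonneg (uu j x)
    rw [Real.norm_eq_abs, Real.norm_eq_abs, Pi.mul_apply, abs_mul, abs_of_nonneg (sq_nonneg (‖V x‖))]
    nlinarith [h1, h2, norm_nonneg (V x)]
  have hz : ∀ j (x v : EuclideanSpace ℝ (Fin n)), fderiv ℝ (uu j) x v = 0 := by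
    intro j
    apply comp_vanish (uu j) (huusm j) _ (huuint j)
    intro x
    have h := hharm j x
    unfold lap at h
    exact h
  -- the full derivative vanishes
  have hzero : ∀ (x v : EuclideanSpace ℝ (Fin n)), fderiv ℝ V x v = 0 := by
    intro x v
    ext j
    have := hz j x v
    rw [hud j x v] at this
    have h2 : ⟪fderiv ℝ V x v, EuclideanSpace.single j (1:ℝ)⟫ = fderiv ℝ V x v j := by
      rw [EuclideanSpace.inner_single_right]
      simp
    rw [h2] at this
    simpa using this
  intro x
  constructor
  · intro u w
    rw [hzero x u, hzero x w, inner_zero_left, inner_zero_left]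
  · apply Finset.sum_eq_zero
    intro i _
    rw [hzero x _]
    simp
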